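/- Suppose every voter has the same nonnegative non-increasing OWA vector λ, so that sco(S) = Σ_{v∈V} Σ_{j=1}^{|A_v ∩ S|} λ_j. Let O = {o_1, …, o_k} ⊆ C be a committee of size k, enumerate {v ∈ V : A_v ∩ O ≠ ∅} = {v_1, …, v_{t'}} with the v_i pairwise distinct, and let χ : V → {1, …, t'} be any coloring with χ(v_i) = i for every i ∈ {1, …, t'}. Let s_1, …, s_k ∈ C be pairwise distinct candidates such that for all i ∈ {1, …, k} and j ∈ {1, …, t'}, if o_i ∈ A_{v_j} then there exists a voter v with s_i ∈ A_v and χ(v) = j. Then S = {s_1, …, s_k} satisfies sco(S) ≥ sco(O). -/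
import Mathlib

open Finset

/-- The score of a committee `S` when all voters share the OWA vector `lam`:
each voter `v` contributes `∑_{j=1}^{|A v ∩ S|} lam j`. -/
def sco {C V : Type*} [Fintype V] [DecidableEq C]
    (A : V → Finset C) (lam : ℕ → ℚ) (S : Finset C) : ℚ :=
  ∑ v : V, ∑ j ∈ Finset.Icc 1 ((A v ∩ S).card), lam j

section aux

variable (lam : ℕ → ℚ)

/-- `f n = ∑_{j=1}^n λ_j` as a sum over `range`. -/
lemma f_eq_range (n : ℕ) : ∑ j ∈ Finset.Icc 1 n, lam j = ∑ j ∈ Finset.range n, lam (j + 1) := by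
  rw [← Finset.Ico_add_one_right_eq_Icc, Finset.sum_Ico_eq_sum_range]
  simp [add_comm]

lemma lam_shift (hmono : ∀ j : ℕ, 1 ≤ j → lam (j + 1) ≤ lam j)
    (a : ℕ) : ∀ j : ℕ, 1 ≤ j → lam (j + a) ≤ lam j := by
  induction a with
  | zero => intro j _; simp
  | succ n ih =>
      intro j hj
      calc lam (j + (n + 1)) = lam ((j + n) + 1) := by ring_nf
        _ ≤ lam (j + n) := hmono _ (le_trans hj (Nat.le_add_right _ _))
        _ ≤ lam j := ih j hj

lemma f_mono (hnonneg : ∀ j : ℕ, 1 ≤ j → 0 ≤ lam j) {a b : ℕ} (hab : a ≤ b) :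
    ∑ j ∈ Finset.Icc 1 a, lam j ≤ ∑ j ∈ Finset.Icc 1 b, lam j := by
  apply Finset.sum_le_sum_of_subset_of_nonneg
  · exact Finset.Icc_subset_Icc_right hab
  · intro j hj _
    exact hnonneg j (Finset.mem_Icc.mp hj).1

lemma f_subadd (hnonneg : ∀ j : ℕ, 1 ≤ j → 0 ≤ lam j)
    (hmono : ∀ j : ℕ, 1 ≤ j → lam (j + 1) ≤ lam j) (a b : ℕ) :
    ∑ j ∈ Finset.Icc 1 (a + b), lam j ≤
      (∑ j ∈ Finset.Icc 1 a, lam j) + ∑ j ∈ Finset.Icc 1 b, lam j := by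
  rw [f_eq_range, f_eq_range, f_eq_range, Finset.sum_range_add]
  gcongr with j hj
  calc lam (a + j + 1) = lam ((j + 1) + a) := by ring_nf
    _ ≤ lam (j + 1) := lam_shift lam hmono a (j + 1) (Nat.le_add_left _ _)

lemma f_sum_le {ι : Type*} [DecidableEq ι] (hnonneg : ∀ j : ℕ, 1 ≤ j → 0 ≤ lam j)
    (hmono : ∀ j : ℕ, 1 ≤ j → lam (j + 1) ≤ lam j) (T : Finset ι) (a : ι → ℕ) :
    ∑ j ∈ Finset.Icc 1 (∑ x ∈ T, a x), lam j ≤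
      ∑ x ∈ T, ∑ j ∈ Finset.Icc 1 (a x), lam j := by
  induction T using Finset.induction with
  | empty => simp
  | @insert x T hx ih =>
      rw [Finset.sum_insert hx, Finset.sum_insert hx]
      calc ∑ j ∈ Finset.Icc 1 (a x + ∑ y ∈ T, a y), lam j
          ≤ (∑ j ∈ Finset.Icc 1 (a x), lam j) + ∑ j ∈ Finset.Icc 1 (∑ y ∈ T, a y), lam j :=
            f_subadd lam hnonneg hmono _ _
        _ ≤ _ := by gcongr

end aux

/-- Correctness of the color-coding step: if `O = {o 1, …, o k}` is a committee,
`v 1, …, v t'` enumerate the voters with positive intersection with `O`, `χ` is a coloring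
with `χ (v i) = i`, and `s 1, …, s k` are pairwise distinct candidates such that whenever
`o i ∈ A (v j)` there is a voter of color `j` approving `s i`, then the committee
`S = {s 1, …, s k}` has score at least that of `O`. -/
theorem stmt_15 {C V : Type*} [Fintype V] [DecidableEq C]
    (A : V → Finset C) (lam : ℕ → ℚ)
    (hnonneg : ∀ j : ℕ, 1 ≤ j → 0 ≤ lam j)
    (hmono : ∀ j : ℕ, 1 ≤ j → lam (j + 1) ≤ lam j)
    (k t' : ℕ)
    (o : Fin k → C) (ho : Function.Injective o)
    (vv : Fin t' → V) (hvv : Function.Injective vv)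
    (hvimg : ∀ u : V, (A u ∩ Finset.univ.image o).Nonempty ↔ ∃ i : Fin t', vv i = u)
    (χ : V → Fin t') (hχ : ∀ i : Fin t', χ (vv i) = i)
    (s : Fin k → C) (hs : Function.Injective s)
    (hcond : ∀ (i : Fin k) (j : Fin t'),
      o i ∈ A (vv j) → ∃ u : V, s i ∈ A u ∧ χ u = j) :
    sco A lam (Finset.univ.image o) ≤ sco A lam (Finset.univ.image s) := by
  classical
  set O := Finset.univ.image o with hO
  set S := Finset.univ.image s with hS
  -- LHS as a sum over colors
  have hLHS : sco A lam O = ∑ j : Fin t', ∑ i ∈ Finset.Icc 1 ((A (vv j) ∩ O).card), lam i := by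
    have e1 : ∑ v ∈ Finset.univ.image vv, (∑ i ∈ Finset.Icc 1 ((A v ∩ O).card), lam i) =
        ∑ j : Fin t', ∑ i ∈ Finset.Icc 1 ((A (vv j) ∩ O).card), lam i :=
      Finset.sum_image (fun a _ b _ h => hvv h)
    rw [sco, ← e1]
    symm
    apply Finset.sum_subset (Finset.subset_univ _)
    intro v _ hv
    have : ¬ (A v ∩ O).Nonempty := by
      rw [hvimg]
      rintro ⟨i, rfl⟩
      exact hv (Finset.mem_image.mpr ⟨i, Finset.mem_univ _, rfl⟩)
    rw [Finset.not_nonempty_iff_eq_empty] at this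
    simp [this]
  -- RHS fiberwise by colors
  have hRHS : sco A lam S =
      ∑ j : Fin t', ∑ v ∈ Finset.univ.filter (fun v => χ v = j),
        ∑ i ∈ Finset.Icc 1 ((A v ∩ S).card), lam i := by
    rw [sco, Finset.sum_fiberwise]
  rw [hLHS, hRHS]
  apply Finset.sum_le_sum
  intro j _
  -- key cardinality bound
  have hcard : (A (vv j) ∩ O).card ≤
      ∑ v ∈ Finset.univ.filter (fun v => χ v = j), (A v ∩ S).card := by
    have h1 : A (vv j) ∩ O = Finset.image o (Finset.univ.filter (fun i => o i ∈ A (vv j))) := by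
      ext c
      simp only [Finset.mem_inter, hO, Finset.mem_image, Finset.mem_filter, Finset.mem_univ,
        true_and]
      constructor
      · rintro ⟨hc, i, _, rfl⟩; exact ⟨i, hc, rfl⟩
      · rintro ⟨i, hi, rfl⟩; exact ⟨hi, i, rfl⟩
    rw [h1, Finset.card_image_of_injective _ ho, ← Finset.card_sigma,
      ← Finset.card_attach (s := Finset.univ.filter (fun i => o i ∈ A (vv j)))]
    apply Finset.card_le_card_of_injOn
      (fun x => ⟨(hcond x.1 j (Finset.mem_filter.mp x.2).2).choose, s x.1⟩)
    · rintro ⟨i, hi⟩ _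
      obtain ⟨hsu, hcu⟩ := (hcond i j (Finset.mem_filter.mp hi).2).choose_spec
      refine Finset.mem_sigma.mpr ⟨by simp [hcu], ?_⟩
      exact Finset.mem_inter.mpr ⟨hsu, Finset.mem_image.mpr ⟨i, Finset.mem_univ _, rfl⟩⟩
    · rintro ⟨i1, hi1⟩ _ ⟨i2, hi2⟩ _ heq
      simp only [Sigma.mk.inj_iff] at heq
      have := hs (eq_of_heq heq.2)
      subst this
      rfl
  calc ∑ i ∈ Finset.Icc 1 ((A (vv j) ∩ O).card), lam i
      ≤ ∑ i ∈ Finset.Icc 1 (∑ v ∈ Finset.univ.filter (fun v => χ v = j), (A v ∩ S).card), lam i :=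
        f_mono lam hnonneg hcard
    _ ≤ _ := f_sum_le lam hnonneg hmono _ _
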